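/- Let M be the symmetric block matrix with diagonal block E (t×t), a repeated off-diagonal block γ (t×s) in the first block row/column, and z copies of F (s×s) on the diagonal with Q (s×s) in all remaining off-diagonal positions. Then the spectrum of F - Q is contained in the spectrum of M with multiplicity z-1, and the remaining s+t eigenvalues of M are the eigenvalues of the matrix M' = [[E, √z γ],[√z γᵀ, F+(z-1)Q]]. -/

import Mathlib

open Matrix Polynomial

lemma aux_charpoly_conj {m : Type*} [Fintype m] [DecidableEq m] (P A : Matrix m m ℝ)
    (h : Pᵀ * P = 1) : (Pᵀ * A * P).charpoly = A.charpoly := by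
  classical
  have h1 : (Pᵀ.map (C : ℝ →+* ℝ[X])) * (P.map C) = 1 := by
    rw [← Matrix.map_mul, h, Matrix.map_one _ (map_zero _) (map_one _)]
  have key : charmatrix (Pᵀ * A * P) = (Pᵀ.map C) * charmatrix A * (P.map C) := by
    unfold charmatrix
    rw [Matrix.mul_sub, Matrix.sub_mul]
    congr 1
    · rw [scalar_apply, ← Matrix.smul_one_eq_diagonal, Matrix.mul_smul, Matrix.smul_mul,
        Matrix.mul_one, h1]
    · simp [RingHom.mapMatrix_apply, Matrix.map_mul]
  have hdet : (Pᵀ.map (C : ℝ →+* ℝ[X])).det * (P.map C).det = 1 := by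
    rw [← det_mul, h1, det_one]
  rw [Matrix.charpoly, key, det_mul, det_mul, Matrix.charpoly]
  ring_nf
  rw [mul_comm, ← mul_assoc, mul_comm (P.map C).det, hdet, one_mul]

lemma aux_charpoly_blockDiagonal {o m : Type*} [Fintype o] [DecidableEq o] [Fintype m]
    [DecidableEq m] (f : o → Matrix m m ℝ) :
    (blockDiagonal f).charpoly = ∏ i, (f i).charpoly := by
  classical
  have : charmatrix (blockDiagonal f) = blockDiagonal (fun i => charmatrix (f i)) := by
    ext ⟨i, k⟩ ⟨j, l⟩
    by_cases hij : (i, k) = (j, l)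
    · cases hij
      simp [blockDiagonal_apply]
    · rw [charmatrix_apply_ne _ _ _ hij]
      rcases eq_or_ne k l with rfl | hkl
      · have : i ≠ j := by rintro rfl; exact hij rfl
        simp [blockDiagonal_apply, this]
      · simp [blockDiagonal_apply, hkl]
  rw [Matrix.charpoly, this, det_blockDiagonal]
  rfl

lemma aux_exists_U (n : ℕ) :
    ∃ U : Matrix (Fin (n+1)) (Fin (n+1)) ℝ, Uᵀ * U = 1 ∧
      ∀ k, U k 0 = (Real.sqrt (n+1))⁻¹ := by
  classical
  set c : ℝ := (Real.sqrt (n+1))⁻¹ with hc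
  have hnpos : (0:ℝ) < (n:ℝ) + 1 := by positivity
  have hcsq : c * c = ((n:ℝ)+1)⁻¹ := by
    rw [hc, ← mul_inv, Real.mul_self_sqrt hnpos.le]
  let v : Fin (n+1) → EuclideanSpace ℝ (Fin (n+1)) := fun _ => WithLp.toLp 2 (fun _ => c)
  have hv : Orthonormal ℝ (({0} : Set (Fin (n+1))).restrict v) := by
    rw [orthonormal_iff_ite]
    rintro ⟨i, hi⟩ ⟨j, hj⟩
    simp only [Set.mem_singleton_iff] at hi hj
    subst hi; subst hj
    simp only [if_pos rfl]
    show ∑ k, _ = (1:ℝ)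
    show ∑ _k : Fin (n+1), c * c = (1:ℝ)
    rw [Finset.sum_const, Finset.card_univ, Fintype.card_fin, nsmul_eq_mul, hcsq]
    push_cast
    field_simp
  have hcard : Module.finrank ℝ (EuclideanSpace ℝ (Fin (n+1))) = Fintype.card (Fin (n+1)) := by
    simp
  obtain ⟨b, hb⟩ := hv.exists_orthonormalBasis_extension_of_card_eq hcard
  refine ⟨Matrix.of fun k l => b l k, ?_, ?_⟩
  · have horth := orthonormal_iff_ite.mp b.orthonormal
    ext k l
    have hkl := horth k l
    rw [PiLp.inner_apply] at hkl
    simp only [RCLike.inner_apply, starRingEnd_apply, star_trivial] at hkl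
    rw [Matrix.mul_apply, Matrix.one_apply]
    simpa [Matrix.transpose_apply, Matrix.of_apply, mul_comm] using hkl
  · intro k
    simp [of_apply, hb 0 rfl, v]

theorem block_matrix_spectrum (t s z : ℕ) (hz : 1 ≤ z)
    (E : Matrix (Fin t) (Fin t) ℝ) (γ : Matrix (Fin t) (Fin s) ℝ)
    (F Q : Matrix (Fin s) (Fin s) ℝ)
    (hE : E.IsHermitian) (hF : F.IsHermitian) (hQ : Q.IsHermitian)
    (M : Matrix (Fin t ⊕ Fin z × Fin s) (Fin t ⊕ Fin z × Fin s) ℝ)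
    (hM : M = Matrix.of fun p q =>
      match p, q with
      | Sum.inl i, Sum.inl j => E i j
      | Sum.inl i, Sum.inr (_, j) => γ i j
      | Sum.inr (_, i), Sum.inl j => γ j i
      | Sum.inr (k, i), Sum.inr (l, j) => if k = l then F i j else Q i j)
    (M' : Matrix (Fin t ⊕ Fin s) (Fin t ⊕ Fin s) ℝ)
    (hM' : M' = Matrix.fromBlocks E ((Real.sqrt z) • γ) ((Real.sqrt z) • γᵀ)
      (F + ((z : ℝ) - 1) • Q)) :
    M.charpoly = (F - Q).charpoly ^ (z - 1) * M'.charpoly := by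
  classical
  obtain ⟨n, rfl⟩ : ∃ n, z = n + 1 := ⟨z - 1, (Nat.succ_pred_eq_of_pos hz).symm⟩
  obtain ⟨U, hU, hU0⟩ := aux_exists_U n
  set sq : ℝ := Real.sqrt ((n:ℝ)+1) with hsq
  have hnpos : (0:ℝ) < (n:ℝ) + 1 := by positivity
  have hsqpos : 0 < sq := Real.sqrt_pos.mpr hnpos
  have hsqsq : sq * sq = (n:ℝ) + 1 := Real.mul_self_sqrt hnpos.le
  have hUorth : ∀ k l, ∑ m, U m k * U m l = if k = l then (1:ℝ) else 0 := by
    intro k l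
    have := congrFun (congrFun hU k) l
    rw [Matrix.mul_apply, Matrix.one_apply] at this
    simpa [Matrix.transpose_apply] using this
  have hUsum : ∀ l, ∑ k, U k l = sq * (if l = 0 then 1 else 0) := by
    intro l
    have h0 := hUorth 0 l
    simp only [hU0] at h0
    rw [← Finset.mul_sum] at h0
    have : ∑ k, U k l = sq * (if (0:Fin (n+1)) = l then (1:ℝ) else 0) := by
      rw [← h0]
      field_simp
    simpa [eq_comm] using this
  -- the conjugating matrix
  set P : Matrix (Fin t ⊕ Fin (n+1) × Fin s) (Fin t ⊕ Fin (n+1) × Fin s) ℝ :=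
    Matrix.of fun p q =>
      match p, q with
      | Sum.inl i, Sum.inl j => if i = j then (1:ℝ) else 0
      | Sum.inl _, Sum.inr _ => 0
      | Sum.inr _, Sum.inl _ => 0
      | Sum.inr (k, i), Sum.inr (l, j) => U k l * (if i = j then 1 else 0) with hP
  -- the conjugated matrix
  set N : Matrix (Fin t ⊕ Fin (n+1) × Fin s) (Fin t ⊕ Fin (n+1) × Fin s) ℝ :=
    Matrix.of fun p q =>
      match p, q with
      | Sum.inl i, Sum.inl j => E i j
      | Sum.inl i, Sum.inr (l, j) => (if l = 0 then sq else 0) * γ i j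
      | Sum.inr (k, i), Sum.inl j => (if k = 0 then sq else 0) * γ j i
      | Sum.inr (k, i), Sum.inr (l, j) =>
          (if k = l then (F - Q) i j else 0) +
          (if k = 0 then (1:ℝ) else 0) * (if l = 0 then (1:ℝ) else 0) * (((n:ℝ)+1) * Q i j)
      with hN
  have hPP : Pᵀ * P = 1 := by
    ext p q
    rcases p with i | ⟨k, i⟩ <;> rcases q with j | ⟨l, j⟩ <;>
      rw [Matrix.mul_apply] <;>
      simp only [Fintype.sum_sum_type, Fintype.sum_prod_type, Matrix.transpose_apply, hP,
        Matrix.of_apply, Matrix.one_apply]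
    · simp [Finset.sum_ite_eq, eq_comm]
    · simp
    · simp
    · simp only [ite_mul, mul_ite, mul_zero, zero_mul, mul_one, one_mul]
      rw [Finset.sum_comm]
      have hy : ∀ y : Fin s, ∑ x, (if y = j then if y = i then U x k * U x l else 0 else 0)
          = if y = j then if y = i then (if k = l then (1:ℝ) else 0) else 0 else 0 := by
        intro y
        split_ifs <;> simp [hUorth] <;> tauto
      rw [Finset.sum_congr rfl fun y _ => hy y]
      simp only [Finset.sum_const_zero, zero_add, Finset.sum_ite_eq', Finset.mem_univ, if_true,
        Sum.inr.injEq, Prod.mk.injEq]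
      by_cases h1 : i = j <;> by_cases h2 : k = l <;> simp [h1, h2, eq_comm]
  have hPMP : Pᵀ * M * P = N := by
    subst hM
    ext p q
    rcases p with i | ⟨k, i⟩ <;> rcases q with j | ⟨l, j⟩ <;>
      simp only [Matrix.mul_assoc, Matrix.mul_apply, Fintype.sum_sum_type, Fintype.sum_prod_type,
        Matrix.transpose_apply, hP, hN, Matrix.of_apply]
    · simp [Finset.sum_ite_eq, Finset.sum_ite_eq']
    · simp only [zero_mul, mul_zero, Finset.sum_const_zero, zero_add, add_zero, ite_mul, one_mul,
        mul_ite, mul_one, Finset.sum_ite_eq, Finset.sum_ite_eq', Finset.mem_univ, if_true,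
        ← Finset.sum_mul, ← Finset.mul_sum, hUsum]
      simp only [ite_self, Finset.sum_const_zero, add_zero, ← Finset.sum_mul, ← Finset.mul_sum,
        hUsum]
      split_ifs <;> ring
    · simp only [zero_mul, mul_zero, Finset.sum_const_zero, zero_add, add_zero, ite_mul, one_mul,
        zero_add, mul_ite, mul_one, Finset.sum_ite_eq, Finset.sum_ite_eq', Finset.mem_univ,
        if_true, ← Finset.sum_mul, ← Finset.mul_sum, hUsum]
    · simp only [zero_mul, mul_zero, Finset.sum_const_zero, zero_add, add_zero, ite_mul, one_mul,
        mul_ite, mul_one, Finset.sum_ite_eq, Finset.sum_ite_eq', Finset.mem_univ, if_true]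
      have hinner : ∀ x : Fin (n+1),
          (∑ x1 : Fin (n+1), ∑ x2 : Fin s,
            if x1 = x then (if x2 = i then U x1 k * F x2 j else 0)
            else (if x2 = i then U x1 k * Q x2 j else 0))
          = U x k * (F - Q) i j + (sq * (if k = 0 then 1 else 0)) * Q i j := by
        intro x
        have e1 : ∀ x1 : Fin (n+1), (∑ x2 : Fin s,
            if x1 = x then (if x2 = i then U x1 k * F x2 j else 0)
            else (if x2 = i then U x1 k * Q x2 j else 0))
            = (if x1 = x then U x1 k * (F - Q) i j else 0) + U x1 k * Q i j := by
          intro x1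
          split_ifs with h <;> simp [Finset.sum_ite_eq', Matrix.sub_apply] <;> ring
        rw [Finset.sum_congr rfl fun x1 _ => e1 x1, Finset.sum_add_distrib,
          Finset.sum_ite_eq', ← Finset.sum_mul, hUsum]
        simp
      rw [Finset.sum_congr rfl fun x _ => by rw [hinner x]]
      simp only [add_mul, Finset.sum_add_distrib]
      have e2 : (∑ x, (U x k * (F - Q) i j) * U x l) = (if k = l then 1 else 0) * (F - Q) i j := by
        rw [Finset.sum_congr rfl fun x _ => show (U x k * (F - Q) i j) * U x l
          = (U x k * U x l) * (F - Q) i j by ring, ← Finset.sum_mul, hUorth]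
      have e3 : (∑ x, ((sq * (if k = 0 then 1 else 0)) * Q i j) * U x l)
          = ((sq * (if k = 0 then 1 else 0)) * Q i j) * (sq * (if l = 0 then 1 else 0)) := by
        rw [← Finset.mul_sum, hUsum]
      rw [e2, e3]
      split_ifs <;> simp [Matrix.sub_apply] <;>
        linear_combination (norm := ring_nf) Q i j * hsqsq
  have hMN : N.charpoly = M.charpoly := by
    rw [← hPMP]; exact aux_charpoly_conj P M hPP
  let g : (Fin t ⊕ Fin (n+1) × Fin s) ≃ ((Fin t ⊕ Fin s) ⊕ Fin s × Fin n) :=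
    { toFun := fun p =>
        match p with
        | Sum.inl i => Sum.inl (Sum.inl i)
        | Sum.inr (k, j) => Fin.cases (Sum.inl (Sum.inr j)) (fun k' => Sum.inr (j, k')) k
      invFun := fun p =>
        match p with
        | Sum.inl (Sum.inl i) => Sum.inl i
        | Sum.inl (Sum.inr j) => Sum.inr (0, j)
        | Sum.inr (j, k') => Sum.inr (k'.succ, j)
      left_inv := by
        rintro (i | ⟨k, j⟩)
        · rfl
        · induction k using Fin.cases <;> simp
      right_inv := by rintro ((i | j) | ⟨j, k⟩) <;> simp }
  have hre : reindex g g N = fromBlocks M' 0 0 (blockDiagonal fun _ : Fin n => F - Q) := by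
    subst hM'
    ext p q
    rcases p with (i | j) | ⟨j, k⟩ <;> rcases q with (i' | j') | ⟨j', k'⟩ <;>
      simp only [reindex_apply, submatrix_apply, g, Equiv.coe_fn_symm_mk, hN, Matrix.of_apply,
        fromBlocks_apply₁₁, fromBlocks_apply₁₂, fromBlocks_apply₂₁, fromBlocks_apply₂₂,
        blockDiagonal_apply, Matrix.zero_apply]
    all_goals
      simp only [if_true, Matrix.smul_apply, Matrix.sub_apply, Matrix.add_apply,
        Matrix.transpose_apply, Fin.succ_ne_zero, if_false, Fin.succ_inj, smul_eq_mul]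
    all_goals try rw [if_neg (Fin.succ_ne_zero _).symm]
    all_goals push_cast
    all_goals try ring
  calc M.charpoly = N.charpoly := hMN.symm
    _ = (reindex g g N).charpoly := (Matrix.charpoly_reindex g N).symm
    _ = (fromBlocks M' 0 0 (blockDiagonal fun _ : Fin n => F - Q)).charpoly := by rw [hre]
    _ = M'.charpoly * (blockDiagonal fun _ : Fin n => F - Q).charpoly :=
        Matrix.charpoly_fromBlocks_zero₂₁ _ _ _
    _ = (F - Q).charpoly ^ (n + 1 - 1) * M'.charpoly := by
        rw [aux_charpoly_blockDiagonal, Finset.prod_const, Finset.card_univ, Fintype.card_fin]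
        simp [mul_comm]
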